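/- arXiv:1804.11167 — 4 statements merged into one kernel-verified Lean document; each statement's English description precedes it below -/
import Mathlib

section
/- Let K be an ω-Calderón–Zygmund kernel on ℝ^d with ω(t) → 0 as t → 0, and suppose K is uniformly non-degenerate: there is c0 > 0 such that for every y ∈ ℝ^d and r > 0 there exists x with |x − y| ≥ r and |K(x,y)| ≥ 1/(c0 r^d). Then there exist constants 0 < c ≤ C (depending only on d, c_K, c0) and a function ε : [3,∞) → [0,∞) with ε(A) → 0 as A → ∞ (depending in addition on ω) such that for every A ≥ 3 and every ball B = B(y0,r) there is a point x0 with A·r ≤ |x0 − y0| ≤ C·A·r and c·(A r)^(−d) ≤ |K(x0,y0)| ≤ C·(A r)^(−d), and, setting B̃ := B(x0,r), for all y1 ∈ B and x1 ∈ B̃ one has ∫_B |K(x1,y) − K(x0,y0)| dy + ∫_{B̃} |K(x,y1) − K(x0,y0)| dx ≤ ε(A)·A^(−d). -/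
open MeasureTheory Metric Filter

lemma ratio_bound (d : ℕ) (ω : ℝ → ℝ)
    (hω_nonneg : ∀ t, 0 ≤ t → t < 1 → 0 ≤ ω t)
    (hω_mono : ∀ s t, 0 ≤ s → s ≤ t → t < 1 → ω s ≤ ω t)
    {r A s D : ℝ} (hr : 0 < r) (hA : 5 ≤ A) (hs0 : 0 ≤ s) (hs : s < r)
    (hD : (A - 2) * r ≤ D) :
    (1 / D ^ d) * ω (s / D) ≤ ω (1 / (A - 2)) / ((A - 2) * r) ^ d := by
  have hA2 : (3 : ℝ) ≤ A - 2 := by linarith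
  have hAr : 0 < (A - 2) * r := by nlinarith
  have hD0 : 0 < D := lt_of_lt_of_le hAr hD
  have hrat : s / D ≤ 1 / (A - 2) := by
    have h1 : s / D ≤ r / ((A - 2) * r) := div_le_div₀ (by positivity) hs.le hAr hD
    have h2 : r / ((A - 2) * r) = 1 / (A - 2) := by
      rw [mul_comm, ← div_div, div_self hr.ne']
    linarith
  have hrat0 : 0 ≤ s / D := div_nonneg hs0 hD0.le
  have hlt1 : 1 / (A - 2) < 1 := by
    rw [div_lt_one (by linarith)]; linarith
  have hω1 : ω (s / D) ≤ ω (1 / (A - 2)) := hω_mono _ _ hrat0 hrat hlt1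
  have hω0 : 0 ≤ ω (s / D) := hω_nonneg _ hrat0 (lt_of_le_of_lt hrat hlt1)
  have hpow : ((A - 2) * r) ^ d ≤ D ^ d := pow_le_pow_left₀ hAr.le hD d
  have h1d : 1 / D ^ d ≤ 1 / ((A - 2) * r) ^ d :=
    one_div_le_one_div_of_le (by positivity) hpow
  calc (1 / D ^ d) * ω (s / D) ≤ (1 / ((A - 2) * r) ^ d) * ω (1 / (A - 2)) :=
        mul_le_mul h1d hω1 hω0 (by positivity)
    _ = ω (1 / (A - 2)) / ((A - 2) * r) ^ d := by ring


set_option maxHeartbeats 1000000 in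
/-- If `K` is an `ω`-Calderón–Zygmund kernel on `ℝ^d` with `ω(t) → 0` as
`t → 0⁺`, and `K` is uniformly non-degenerate, then there are constants `0 < c ≤ C` and a
function `ε : ℝ → ℝ` (used on `[3,∞)`) tending to `0` at infinity such that for every `A ≥ 3`
and every ball `B = B(y₀,r)` there is a point `x₀` with `A·r ≤ |x₀ − y₀| ≤ C·A·r`,
`c·(Ar)^{-d} ≤ |K(x₀,y₀)| ≤ C·(Ar)^{-d}`, and for all `y₁ ∈ B`, `x₁ ∈ B̃ := B(x₀,r)`,
`∫_B |K(x₁,y) − K(x₀,y₀)| dy + ∫_{B̃} |K(x,y₁) − K(x₀,y₀)| dx ≤ ε(A)·A^{-d}`. -/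
theorem statement0
    (d : ℕ) (hd : 1 ≤ d)
    (K : EuclideanSpace ℝ (Fin d) → EuclideanSpace ℝ (Fin d) → ℂ)
    (hKmeas : Measurable fun p : EuclideanSpace ℝ (Fin d) × EuclideanSpace ℝ (Fin d) => K p.1 p.2)
    (ω : ℝ → ℝ)
    (hω_nonneg : ∀ t, 0 ≤ t → t < 1 → 0 ≤ ω t)
    (hω_mono : ∀ s t, 0 ≤ s → s ≤ t → t < 1 → ω s ≤ ω t)
    (hω_lim : Tendsto ω (nhdsWithin 0 (Set.Ioi 0)) (nhds 0))
    (cK : ℝ)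
    -- standard size estimate
    (hK_size : ∀ x y : EuclideanSpace ℝ (Fin d), x ≠ y →
      ‖K x y‖ ≤ cK / dist x y ^ d)
    -- standard smoothness estimate with modulus of continuity ω
    (hK_smooth : ∀ x x' y : EuclideanSpace ℝ (Fin d), dist x x' < dist x y / 2 →
      ‖K x y - K x' y‖ + ‖K y x - K y x'‖
        ≤ (1 / dist x y ^ d) * ω (dist x x' / dist x y))
    -- uniform non-degeneracy
    (c0 : ℝ) (hc0 : 0 < c0)
    (hK_nondeg : ∀ (y : EuclideanSpace ℝ (Fin d)) (r : ℝ), 0 < r →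
      ∃ x : EuclideanSpace ℝ (Fin d), r ≤ dist x y ∧ 1 / (c0 * r ^ d) ≤ ‖K x y‖) :
    ∃ c C : ℝ, 0 < c ∧ c ≤ C ∧
      ∃ ε : ℝ → ℝ, (∀ A, 3 ≤ A → 0 ≤ ε A) ∧ Tendsto ε atTop (nhds 0) ∧
        ∀ A : ℝ, 3 ≤ A → ∀ (y0 : EuclideanSpace ℝ (Fin d)) (r : ℝ), 0 < r →
          ∃ x0 : EuclideanSpace ℝ (Fin d),
            A * r ≤ dist x0 y0 ∧ dist x0 y0 ≤ C * A * r ∧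
            c / (A * r) ^ d ≤ ‖K x0 y0‖ ∧
            ‖K x0 y0‖ ≤ C / (A * r) ^ d ∧
            ∀ y1 ∈ ball y0 r, ∀ x1 ∈ ball x0 r,
              (∫ y in ball y0 r, ‖K x1 y - K x0 y0‖)
                + (∫ x in ball x0 r, ‖K x y1 - K x0 y0‖)
                ≤ ε A / A ^ d := by
  classical
  -- cK is positive and cK * c0 ≥ 1
  have hcK0 : 0 < cK ∧ 1 ≤ cK * c0 := by
    obtain ⟨x, hx1, hx2⟩ := hK_nondeg 0 1 one_pos
    have hxne : x ≠ 0 := by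
      intro h; rw [h, dist_self] at hx1; linarith
    have h3 := hK_size x 0 hxne
    have hdp : (1 : ℝ) ≤ dist x 0 := hx1
    have hdp' : (1 : ℝ) ≤ dist x 0 ^ d := one_le_pow₀ hdp
    have h4 : 1 / (c0 * 1 ^ d) ≤ cK / dist x 0 ^ d := le_trans hx2 h3
    rw [one_pow, mul_one] at h4
    have h5 : 0 < cK / dist x 0 ^ d := lt_of_lt_of_le (by positivity) h4
    have hcKpos : 0 < cK := by
      by_contra h
      push_neg at h
      have : cK / dist x 0 ^ d ≤ 0 := div_nonpos_of_nonpos_of_nonneg h (by positivity)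
      linarith
    constructor
    · exact hcKpos
    · -- 1/c0 ≤ cK / dist^d ≤ cK
      have h6 : cK / dist x 0 ^ d ≤ cK := by
        rw [div_le_iff₀ (by positivity)]
        nlinarith
      have h7 : 1 / c0 ≤ cK := le_trans h4 h6
      rw [div_le_iff₀ hc0] at h7
      linarith
  obtain ⟨hcK, hcKc0⟩ := hcK0
  set v : ℝ := (volume (ball (0 : EuclideanSpace ℝ (Fin d)) 1)).toReal with hv
  have hv0 : 0 ≤ v := ENNReal.toReal_nonneg
  refine ⟨1 / c0, cK * c0 + cK, by positivity, ?_, ?_⟩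
  · -- 1/c0 ≤ cK*c0 + cK
    have : 1 / c0 ≤ cK := by
      rw [div_le_iff₀ hc0]; linarith
    nlinarith
  refine ⟨fun A => if A < 5 then 4 * v * cK * 5 ^ d
      else 4 * v * ω (1 / (A - 2)) * (A / (A - 2)) ^ d, ?_, ?_, ?_⟩
  · -- nonnegativity of ε
    intro A hA
    by_cases h : A < 5
    · simp only [if_pos h]; positivity
    · simp only [if_neg h]
      push_neg at h
      have h1 : (0 : ℝ) ≤ 1 / (A - 2) := div_nonneg zero_le_one (by linarith)
      have h2 : 1 / (A - 2) < 1 := by rw [div_lt_one (by linarith)]; linarith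
      have hωn := hω_nonneg _ h1 h2
      have h3 : (0 : ℝ) ≤ (A / (A - 2)) ^ d := pow_nonneg (div_nonneg (by linarith) (by linarith)) d
      exact mul_nonneg (mul_nonneg (by positivity) hωn) h3
  · -- Tendsto ε atTop 0
    have h1 : Tendsto (fun A : ℝ => 1 / (A - 2)) atTop (nhdsWithin 0 (Set.Ioi 0)) := by
      have := tendsto_inv_atTop_nhdsGT_zero.comp
        (tendsto_atTop_add_const_right atTop (-2 : ℝ) tendsto_id)
      refine this.congr fun A => ?_
      simp [sub_eq_add_neg, one_div]
    have hω' : Tendsto (fun A : ℝ => ω (1 / (A - 2))) atTop (nhds 0) := hω_lim.comp h1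
    apply squeeze_zero' (g := fun A : ℝ => (4 * v * 2 ^ d) * ω (1 / (A - 2)))
    · filter_upwards [eventually_ge_atTop (5 : ℝ)] with A hA
      rw [if_neg (by linarith)]
      have h1 : (0 : ℝ) ≤ 1 / (A - 2) := div_nonneg zero_le_one (by linarith)
      have h2 : 1 / (A - 2) < 1 := by rw [div_lt_one (by linarith)]; linarith
      have hωn := hω_nonneg _ h1 h2
      have h3 : (0 : ℝ) ≤ (A / (A - 2)) ^ d := pow_nonneg (div_nonneg (by linarith) (by linarith)) d
      exact mul_nonneg (mul_nonneg (by positivity) hωn) h3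
    · filter_upwards [eventually_ge_atTop (5 : ℝ)] with A hA
      rw [if_neg (by linarith)]
      have h1 : (0 : ℝ) ≤ 1 / (A - 2) := div_nonneg zero_le_one (by linarith)
      have h2 : 1 / (A - 2) < 1 := by rw [div_lt_one (by linarith)]; linarith
      have hωn := hω_nonneg _ h1 h2
      have h3 : (A / (A - 2)) ^ d ≤ 2 ^ d := by
        apply pow_le_pow_left₀ (div_nonneg (by linarith) (by linarith))
        rw [div_le_iff₀ (by linarith)]; linarith
      calc 4 * v * ω (1 / (A - 2)) * (A / (A - 2)) ^ d
          ≤ 4 * v * ω (1 / (A - 2)) * 2 ^ d := by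
            exact mul_le_mul_of_nonneg_left h3 (by positivity)
        _ = (4 * v * 2 ^ d) * ω (1 / (A - 2)) := by ring
    · have := hω'.const_mul (4 * v * 2 ^ d)
      simpa using this
  · -- main estimate
    intro A hA y0 r hr
    have hA0 : (0 : ℝ) < A := by linarith
    have hAr : 0 < A * r := by positivity
    obtain ⟨x0, hDge, hKge⟩ := hK_nondeg y0 (A * r) hAr
    have hDpos : 0 < dist x0 y0 := lt_of_lt_of_le hAr hDge
    have hne : x0 ≠ y0 := dist_pos.mp hDpos
    have hsize0 : ‖K x0 y0‖ ≤ cK / dist x0 y0 ^ d := hK_size _ _ hne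
    refine ⟨x0, hDge, ?_, ?_, ?_, ?_⟩
    · -- dist ≤ C * A * r
      have h1 : 1 / (c0 * (A * r) ^ d) ≤ cK / dist x0 y0 ^ d := le_trans hKge hsize0
      rw [div_le_div_iff₀ (mul_pos hc0 (pow_pos hAr d)) (pow_pos hDpos d)] at h1
      have h2 : dist x0 y0 ^ d ≤ (cK * c0 * (A * r)) ^ d := by
        have h3 : cK * c0 ≤ (cK * c0) ^ d := le_self_pow₀ hcKc0 (by omega)
        calc dist x0 y0 ^ d ≤ cK * c0 * (A * r) ^ d := by nlinarith
          _ ≤ (cK * c0) ^ d * (A * r) ^ d := by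
              apply mul_le_mul_of_nonneg_right h3 (pow_nonneg hAr.le d)
          _ = (cK * c0 * (A * r)) ^ d := (mul_pow _ _ _).symm
      have h4 : dist x0 y0 ≤ cK * c0 * (A * r) :=
        (pow_le_pow_iff_left₀ dist_nonneg (by nlinarith) (by omega)).mp h2
      nlinarith
    · -- lower bound on |K|
      rw [div_div]; exact hKge
    · -- upper bound on |K|
      have h1 : cK / dist x0 y0 ^ d ≤ cK / (A * r) ^ d := by
        apply div_le_div₀ hcK.le le_rfl (pow_pos hAr d)
        exact pow_le_pow_left₀ hAr.le hDge d
      have h2 : cK / (A * r) ^ d ≤ (cK * c0 + cK) / (A * r) ^ d := by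
        gcongr
        nlinarith
      linarith
    · -- the integral estimate
      haveI : Nonempty (Fin d) := ⟨⟨0, by omega⟩⟩
      have hvol : ∀ z : EuclideanSpace ℝ (Fin d), (volume (ball z r)).toReal = r ^ d * v := by
        intro z
        rw [Measure.addHaar_ball volume z hr.le, ENNReal.toReal_mul,
          ENNReal.toReal_ofReal (by positivity), finrank_euclideanSpace_fin]
      have intle : ∀ (z : EuclideanSpace ℝ (Fin d)) (f : EuclideanSpace ℝ (Fin d) → ℝ) (M : ℝ),
          (∀ w ∈ ball z r, 0 ≤ f w ∧ f w ≤ M) →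
          (∫ w in ball z r, f w) ≤ M * (r ^ d * v) := by
        intro z f M h
        have h1 : ‖∫ w in ball z r, f w‖ ≤ M * (volume (ball z r)).toReal :=
          norm_setIntegral_le_of_norm_le_const_ae' measure_ball_lt_top
            (Filter.Eventually.of_forall fun w hw => by
              rw [Real.norm_eq_abs, abs_of_nonneg (h w hw).1]; exact (h w hw).2)
        rw [hvol z] at h1
        exact le_trans (le_abs_self _) (by rwa [Real.norm_eq_abs] at h1)
      intro y1 hy1 x1 hx1
      rw [mem_ball] at hy1 hx1
      rcases lt_or_ge A 5 with hA5 | hA5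
      · -- crude estimate for 3 ≤ A < 5
        simp only [if_pos hA5]
        have habs : ∀ a b : ℂ, ‖a - b‖ ≤ ‖a‖ + ‖b‖ :=
          fun a b => by simpa using norm_sub_le a b
        have hsz : ∀ x y : EuclideanSpace ℝ (Fin d), r ≤ dist x y →
            ‖K x y‖ ≤ cK / r ^ d := by
          intro x y hxy
          have hne' : x ≠ y := dist_pos.mp (lt_of_lt_of_le hr hxy)
          exact le_trans (hK_size x y hne')
            (div_le_div₀ hcK.le le_rfl (pow_pos hr d) (pow_le_pow_left₀ hr.le hxy d))
        have h00 : ‖K x0 y0‖ ≤ cK / r ^ d := by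
          apply hsz; nlinarith
        have hI1 : (∫ y in ball y0 r, ‖K x1 y - K x0 y0‖) ≤
            (2 * cK / r ^ d) * (r ^ d * v) := by
          apply intle
          intro w hw
          rw [mem_ball] at hw
          refine ⟨norm_nonneg _, ?_⟩
          have h4 := dist_triangle4 x0 x1 w y0
          rw [dist_comm x0 x1] at h4
          have hrw : r ≤ dist x1 w := by nlinarith
          have := hsz x1 w hrw
          calc ‖K x1 w - K x0 y0‖
              ≤ ‖K x1 w‖ + ‖K x0 y0‖ := habs _ _
            _ ≤ cK / r ^ d + cK / r ^ d := add_le_add this h00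
            _ = 2 * cK / r ^ d := by ring
        have hI2 : (∫ x in ball x0 r, ‖K x y1 - K x0 y0‖) ≤
            (2 * cK / r ^ d) * (r ^ d * v) := by
          apply intle
          intro w hw
          rw [mem_ball] at hw
          refine ⟨norm_nonneg _, ?_⟩
          have h4 := dist_triangle4 x0 w y1 y0
          rw [dist_comm x0 w] at h4
          have hrw : r ≤ dist w y1 := by nlinarith
          have := hsz w y1 hrw
          calc ‖K w y1 - K x0 y0‖
              ≤ ‖K w y1‖ + ‖K x0 y0‖ := habs _ _
            _ ≤ cK / r ^ d + cK / r ^ d := add_le_add this h00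
            _ = 2 * cK / r ^ d := by ring
        have heq : (2 * cK / r ^ d) * (r ^ d * v) = 2 * cK * v := by
          field_simp
        have h5 : A ^ d ≤ 5 ^ d := pow_le_pow_left₀ hA0.le (by linarith) d
        have hfin : 2 * cK * v + 2 * cK * v ≤ 4 * v * cK * 5 ^ d / A ^ d := by
          rw [le_div_iff₀ (pow_pos hA0 d)]
          nlinarith [mul_nonneg (mul_nonneg hcK.le hv0) (sub_nonneg.mpr h5)]
        linarith [hI1, hI2]
      · -- smooth estimate for A ≥ 5
        simp only [if_neg (not_lt.mpr hA5)]
        set w := ω (1 / (A - 2)) with hw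
        set M : ℝ := 2 * w / ((A - 2) * r) ^ d with hM
        have hI1 : (∫ y in ball y0 r, ‖K x1 y - K x0 y0‖) ≤ M * (r ^ d * v) := by
          apply intle
          intro y hy
          rw [mem_ball] at hy
          refine ⟨norm_nonneg _, ?_⟩
          -- distance estimates
          have h4 := dist_triangle4 x0 x1 y y0
          rw [dist_comm x0 x1, dist_comm x1 y] at h4
          have hdyx1 : (A - 2) * r ≤ dist y x1 := by linarith
          have cond1 : dist y y0 < dist y x1 / 2 := by
            nlinarith [mul_pos (show (0:ℝ) < A - 4 by linarith) hr]
          have ht1 := hK_smooth y y0 x1 cond1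
          have e1 : ‖K x1 y - K x1 y0‖
              ≤ (1 / dist y x1 ^ d) * ω (dist y y0 / dist y x1) := by
            have := norm_nonneg (K y x1 - K y0 x1); linarith
          have e1' := ratio_bound d ω hω_nonneg hω_mono hr hA5 dist_nonneg hy hdyx1
          have h5 := dist_triangle x0 x1 y0
          rw [dist_comm x0 x1] at h5
          have hdx1y0 : (A - 2) * r ≤ dist x1 y0 := by linarith
          have cond2 : dist x1 x0 < dist x1 y0 / 2 := by
            nlinarith [mul_pos (show (0:ℝ) < A - 4 by linarith) hr]
          have ht2 := hK_smooth x1 x0 y0 cond2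
          have e2 : ‖K x1 y0 - K x0 y0‖
              ≤ (1 / dist x1 y0 ^ d) * ω (dist x1 x0 / dist x1 y0) := by
            have := norm_nonneg (K y0 x1 - K y0 x0); linarith
          have e2' := ratio_bound d ω hω_nonneg hω_mono hr hA5 dist_nonneg hx1 hdx1y0
          have tri := norm_sub_le_norm_sub_add_norm_sub (K x1 y) (K x1 y0) (K x0 y0)
          have : M = w / ((A - 2) * r) ^ d + w / ((A - 2) * r) ^ d := by
            rw [hM]; ring
          rw [this]
          linarith
        have hI2 : (∫ x in ball x0 r, ‖K x y1 - K x0 y0‖) ≤ M * (r ^ d * v) := by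
          apply intle
          intro x hx
          rw [mem_ball] at hx
          refine ⟨norm_nonneg _, ?_⟩
          have h4 := dist_triangle4 x0 x y1 y0
          rw [dist_comm x0 x] at h4
          have hdxy1 : (A - 2) * r ≤ dist x y1 := by linarith
          have cond3 : dist x x0 < dist x y1 / 2 := by
            nlinarith [mul_pos (show (0:ℝ) < A - 4 by linarith) hr]
          have ht3 := hK_smooth x x0 y1 cond3
          have e3 : ‖K x y1 - K x0 y1‖
              ≤ (1 / dist x y1 ^ d) * ω (dist x x0 / dist x y1) := by
            have := norm_nonneg (K y1 x - K y1 x0); linarith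
          have e3' := ratio_bound d ω hω_nonneg hω_mono hr hA5 dist_nonneg hx hdxy1
          have h5 := dist_triangle x0 y1 y0
          rw [dist_comm x0 y1] at h5
          have hdy1x0 : (A - 2) * r ≤ dist y1 x0 := by linarith
          have cond4 : dist y1 y0 < dist y1 x0 / 2 := by
            nlinarith [mul_pos (show (0:ℝ) < A - 4 by linarith) hr]
          have ht4 := hK_smooth y1 y0 x0 cond4
          have e4 : ‖K x0 y1 - K x0 y0‖
              ≤ (1 / dist y1 x0 ^ d) * ω (dist y1 y0 / dist y1 x0) := by
            have := norm_nonneg (K y1 x0 - K y0 x0); linarith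
          have e4' := ratio_bound d ω hω_nonneg hω_mono hr hA5 dist_nonneg hy1 hdy1x0
          have tri := norm_sub_le_norm_sub_add_norm_sub (K x y1) (K x0 y1) (K x0 y0)
          have : M = w / ((A - 2) * r) ^ d + w / ((A - 2) * r) ^ d := by
            rw [hM]; ring
          rw [this]
          linarith
        have hA20 : (A - 2 : ℝ) ≠ 0 := by linarith
        have heq : M * (r ^ d * v) + M * (r ^ d * v)
            = 4 * v * w * (A / (A - 2)) ^ d / A ^ d := by
          rw [hM, div_pow, mul_pow]
          field_simp
          ring
        linarith [hI1, hI2]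
end

section
/- Let d ≥ 1, r ∈ [1,∞), and let b ∈ L^r_loc(ℝ^d;ℂ) satisfy (∫_Q |b − ⟨b⟩_Q|^r)^{1/r} ≤ Θ for every cube Q ⊂ ℝ^d. Then there exist a constant c ∈ ℂ and a function a ∈ L^r(ℝ^d) with ‖a‖_{L^r(ℝ^d)} ≤ Θ such that b = a + c almost everywhere. -/
open MeasureTheory Metric Filter
open scoped ENNReal NNReal Topology

/-- The closed axis-parallel cube with corner `c` and side length `ℓ` in `ℝ^d`. -/
def cube {d : ℕ} (c : EuclideanSpace ℝ (Fin d)) (ℓ : ℝ) : Set (EuclideanSpace ℝ (Fin d)) :=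
  {x | ∀ i, c i ≤ x i ∧ x i ≤ c i + ℓ}

lemma cube_eq_pi {d : ℕ} (c : EuclideanSpace ℝ (Fin d)) (ℓ : ℝ) :
    cube c ℓ = WithLp.ofLp ⁻¹' Set.univ.pi (fun i => Set.Icc (c i) (c i + ℓ)) := by
  ext x
  exact ⟨fun h i _ => Set.mem_Icc.2 (h i), fun h i => Set.mem_Icc.1 (h i trivial)⟩

lemma isCompact_cube {d : ℕ} (c : EuclideanSpace ℝ (Fin d)) (ℓ : ℝ) :
    IsCompact (cube c ℓ) := by
  have h : cube c ℓ = (EuclideanSpace.equiv (Fin d) ℝ).symm ''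
      Set.univ.pi (fun i => Set.Icc (c i) (c i + ℓ)) := by
    rw [cube_eq_pi]
    ext x
    simp only [Set.mem_image]
    constructor
    · intro hx; exact ⟨x.ofLp, hx, rfl⟩
    · rintro ⟨y, hy, rfl⟩; exact hy
  rw [h]
  exact (isCompact_univ_pi fun i => isCompact_Icc).image
    (ContinuousLinearEquiv.continuous _)

lemma measurableSet_cube {d : ℕ} (c : EuclideanSpace ℝ (Fin d)) (ℓ : ℝ) :
    MeasurableSet (cube c ℓ) := (isCompact_cube c ℓ).isClosed.measurableSet

lemma volume_cube {d : ℕ} (c : EuclideanSpace ℝ (Fin d)) (ℓ : ℝ) :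
    volume (cube c ℓ) = ENNReal.ofReal ℓ ^ d := by
  have hpre : cube c ℓ = (MeasurableEquiv.toLp 2 (Fin d → ℝ)).symm ⁻¹'
      (Set.univ.pi fun i => Set.Icc (c i) (c i + ℓ)) := by
    rw [cube_eq_pi]; rfl
  rw [hpre, (EuclideanSpace.volume_preserving_symm_measurableEquiv_toLp (Fin d)).measure_preimage
    (MeasurableSet.univ_pi fun i => measurableSet_Icc).nullMeasurableSet]
  rw [volume_pi_pi]
  simp [Real.volume_Icc]

/-- If `b ∈ L^r_loc(ℝ^d)` satisfies `‖b − ⟨b⟩_Q‖_{L^r(Q)} ≤ Θ` for every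
cube `Q`, then `b = a + c` a.e. with `c` constant, `a ∈ L^r(ℝ^d)` and `‖a‖_{L^r} ≤ Θ`. -/
theorem statement11 (d : ℕ) (hd : 1 ≤ d) (r : ℝ) (hr : 1 ≤ r)
    (b : EuclideanSpace ℝ (Fin d) → ℂ)
    (hbmeas : Measurable b)
    (hbloc : LocallyIntegrable b volume)
    -- b ∈ L^r_loc
    (hbr : ∀ (c : EuclideanSpace ℝ (Fin d)) (ℓ : ℝ), 0 < ℓ →
      IntegrableOn (fun x => ‖b x‖ ^ r) (cube c ℓ) volume)
    (Θ : ℝ)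
    (hosc : ∀ (c : EuclideanSpace ℝ (Fin d)) (ℓ : ℝ), 0 < ℓ →
      (∫ x in cube c ℓ, ‖b x - ⨍ y in cube c ℓ, b y‖ ^ r) ^ (1 / r) ≤ Θ) :
    ∃ (c0 : ℂ) (a : EuclideanSpace ℝ (Fin d) → ℂ),
      MemLp a (ENNReal.ofReal r) volume ∧
      eLpNorm a (ENNReal.ofReal r) volume ≤ ENNReal.ofReal Θ ∧
      ∀ᵐ x ∂(volume : Measure (EuclideanSpace ℝ (Fin d))), b x = a x + c0 := by
  have hr0 : (0:ℝ) < r := lt_of_lt_of_le one_pos hr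
  set p : ℝ≥0∞ := ENNReal.ofReal r with hp_def
  have hp_toReal : p.toReal = r := ENNReal.toReal_ofReal hr0.le
  have hp_ne_zero : p ≠ 0 := by
    simp [hp_def, ENNReal.ofReal_eq_zero, not_le, hr0]
  have hp_ne_top : p ≠ ∞ := ENNReal.ofReal_ne_top
  have hp_one_le : 1 ≤ p := by
    rw [hp_def, ← ENNReal.ofReal_one]; exact ENNReal.ofReal_le_ofReal hr
  have hΘ : 0 ≤ Θ :=
    le_trans (Real.rpow_nonneg
      (integral_nonneg fun x => Real.rpow_nonneg (norm_nonneg _) r) _)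
      (hosc 0 1 one_pos)
  -- the key per-cube lintegral bound
  have keyQ : ∀ (c : EuclideanSpace ℝ (Fin d)) (ℓ : ℝ), 0 < ℓ →
      ∫⁻ x in cube c ℓ, (‖b x - ⨍ y in cube c ℓ, b y‖₊ : ℝ≥0∞) ^ r ≤ ENNReal.ofReal (Θ ^ r) := by
    intro c ℓ hℓ
    set Q := cube c ℓ with hQ
    set m := ⨍ y in Q, b y with hmdef
    haveI : IsFiniteMeasure (volume.restrict Q) :=
      ⟨by rw [Measure.restrict_apply_univ]; exact (isCompact_cube c ℓ).measure_lt_top⟩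
    have hb1 : MemLp (fun x => ‖b x‖ ^ p.toReal) (p / p) (volume.restrict Q) := by
      rw [ENNReal.div_self hp_ne_zero hp_ne_top, memLp_one_iff_integrable]
      simpa [hp_toReal, IntegrableOn] using (hbr c ℓ hℓ)
    have hbLp : MemLp b p (volume.restrict Q) :=
      (memLp_norm_rpow_iff hbmeas.aestronglyMeasurable hp_ne_zero hp_ne_top).1 hb1
    have haLp : MemLp (fun x => b x - m) p (volume.restrict Q) :=
      hbLp.sub (memLp_const m)
    have hIr : Integrable (fun x => ‖b x - m‖ ^ r) (volume.restrict Q) := by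
      have := haLp.integrable_norm_rpow hp_ne_zero hp_ne_top
      simpa [hp_toReal] using this
    have hnn : 0 ≤ᵐ[volume.restrict Q] fun x => ‖b x - m‖ ^ r :=
      Filter.Eventually.of_forall fun x => Real.rpow_nonneg (norm_nonneg _) r
    have hR : ∫ x in Q, ‖b x - m‖ ^ r ≤ Θ ^ r := by
      have h0 : 0 ≤ ∫ x in Q, ‖b x - m‖ ^ r :=
        integral_nonneg fun x => Real.rpow_nonneg (norm_nonneg _) r
      have h1 := hosc c ℓ hℓ
      calc ∫ x in Q, ‖b x - m‖ ^ r
          = ((∫ x in Q, ‖b x - m‖ ^ r) ^ (1/r)) ^ r := by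
            rw [← Real.rpow_mul h0, one_div_mul_cancel hr0.ne', Real.rpow_one]
        _ ≤ Θ ^ r := Real.rpow_le_rpow (Real.rpow_nonneg h0 _) h1 hr0.le
    calc ∫⁻ x in Q, (‖b x - m‖₊ : ℝ≥0∞) ^ r
        = ∫⁻ x in Q, ENNReal.ofReal (‖b x - m‖ ^ r) := by
          refine lintegral_congr fun x => ?_
          rw [← ENNReal.ofReal_rpow_of_nonneg (norm_nonneg _) hr0.le]
          congr 1
          exact (ofReal_norm _).symm
      _ = ENNReal.ofReal (∫ x in Q, ‖b x - m‖ ^ r) :=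
          (ofReal_integral_eq_lintegral_ofReal hIr hnn).symm
      _ ≤ ENNReal.ofReal (Θ ^ r) := ENNReal.ofReal_le_ofReal hR
  -- the increasing sequence of cubes
  set Qn : ℕ → Set (EuclideanSpace ℝ (Fin d)) :=
    fun n => cube (WithLp.toLp 2 fun _ => -((n:ℝ)+1)) (2*((n:ℝ)+1)) with hQndef
  have hside : ∀ n : ℕ, (0:ℝ) < 2*((n:ℝ)+1) := fun n => by positivity
  have hmem : ∀ (n:ℕ) (x : EuclideanSpace ℝ (Fin d)),
      x ∈ Qn n ↔ ∀ i, -((n:ℝ)+1) ≤ x i ∧ x i ≤ (n:ℝ)+1 := by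
    intro n x
    simp only [hQndef, cube, Set.mem_setOf_eq]
    constructor
    · intro h i; obtain ⟨h1, h2⟩ := h i; exact ⟨h1, by linarith⟩
    · intro h i; obtain ⟨h1, h2⟩ := h i; exact ⟨h1, by linarith⟩
  have hQmono : Monotone Qn := by
    intro n m hnm x hx
    rw [hmem] at hx ⊢
    intro i
    have hc : (n:ℝ) ≤ m := Nat.cast_le.2 hnm
    obtain ⟨h1, h2⟩ := hx i
    exact ⟨by linarith, by linarith⟩
  have hQcover : ∀ x, ∃ n, x ∈ Qn n := by
    intro x
    set M : ℕ := Finset.univ.sup (fun i : Fin d => ⌈|x i|⌉₊) with hM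
    refine ⟨M, (hmem M x).2 fun i => ?_⟩
    have h1 : |x i| ≤ (M:ℝ) := by
      calc |x i| ≤ (⌈|x i|⌉₊ : ℝ) := Nat.le_ceil _
        _ ≤ (M:ℝ) := Nat.cast_le.2 (Finset.le_sup (f := fun i : Fin d => ⌈|x i|⌉₊) (Finset.mem_univ i))
    rw [abs_le] at h1
    exact ⟨by linarith [h1.1], by linarith [h1.2]⟩
  have hQvol_toReal : ∀ n, (volume (Qn n)).toReal = (2*((n:ℝ)+1))^d := by
    intro n
    have : volume (Qn n) = ENNReal.ofReal (2*((n:ℝ)+1)) ^ d := volume_cube _ _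
    rw [this, ENNReal.toReal_pow, ENNReal.toReal_ofReal (hside n).le]
  have hQfin : ∀ n, volume (Qn n) ≠ ∞ := fun n => (isCompact_cube _ _).measure_lt_top.ne
  have hvpos : ∀ n : ℕ, (0:ℝ) < (2*((n:ℝ)+1))^d := fun n => pow_pos (hside n) d
  set cm : ℕ → ℂ := fun n => ⨍ y in Qn n, b y with hcmdef
  have keyQn : ∀ n, ∫⁻ x in Qn n, (‖b x - cm n‖₊ : ℝ≥0∞) ^ r ≤ ENNReal.ofReal (Θ ^ r) :=
    fun n => keyQ _ _ (hside n)
  have hofr : (ENNReal.ofReal (Θ ^ r)) ^ (1/r) = ENNReal.ofReal Θ := by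
    rw [ENNReal.ofReal_rpow_of_nonneg (Real.rpow_nonneg hΘ r) (by positivity),
      ← Real.rpow_mul hΘ, mul_one_div_cancel hr0.ne', Real.rpow_one]
  have hsn : ∀ n, eLpNorm (fun x => b x - cm n) p (volume.restrict (Qn n)) ≤ ENNReal.ofReal Θ := by
    intro n
    rw [eLpNorm_eq_lintegral_rpow_enorm_toReal hp_ne_zero hp_ne_top, hp_toReal]
    calc (∫⁻ x in Qn n, (‖b x - cm n‖₊:ℝ≥0∞) ^ r) ^ (1/r)
        ≤ (ENNReal.ofReal (Θ ^ r)) ^ (1/r) :=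
          ENNReal.rpow_le_rpow (keyQn n) (by positivity)
      _ = ENNReal.ofReal Θ := hofr
  -- distance bound between consecutive averages
  have hdist : ∀ n m : ℕ, n ≤ m →
      dist (cm n) (cm m) ≤ Θ * ((2*((n:ℝ)+1))^d) ^ (-(1/r)) := by
    intro n m hnm
    have hvne : (volume (Qn n)).toReal ≠ 0 := by rw [hQvol_toReal]; exact (hvpos n).ne'
    have hbi : IntegrableOn b (Qn n) volume := hbloc.integrableOn_isCompact (isCompact_cube _ _)
    have hci : IntegrableOn (fun _ => cm m) (Qn n) volume :=
      integrableOn_const (hQfin n)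
    have hint : ∫ y in Qn n, (b y - cm m) =
        (∫ y in Qn n, b y) - (volume (Qn n)).toReal • cm m := by
      rw [integral_sub hbi hci, setIntegral_const]; rfl
    have havg : cm n - cm m = (volume (Qn n)).toReal⁻¹ • ∫ y in Qn n, (b y - cm m) := by
      rw [hint, smul_sub, smul_smul, inv_mul_cancel₀ hvne, one_smul]
      congr 1
      exact setAverage_eq volume b (Qn n)
    have hnormint : ∫ y in Qn n, ‖b y - cm m‖ ≤ Θ * ((2*((n:ℝ)+1))^d) ^ (1 - 1/r) := by
      have hmeasg : AEStronglyMeasurable (fun y => b y - cm m)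
          (volume.restrict (Qn n)) := (hbmeas.sub measurable_const).aestronglyMeasurable
      have e1 : ∫ y in Qn n, ‖b y - cm m‖ =
          (∫⁻ y in Qn n, (‖b y - cm m‖₊ : ℝ≥0∞)).toReal :=
        integral_norm_eq_lintegral_enorm hmeasg
      have h3 := eLpNorm_le_eLpNorm_mul_rpow_measure_univ (p := 1) (q := p)
        hp_one_le hmeasg
      rw [eLpNorm_one_eq_lintegral_enorm, Measure.restrict_apply_univ] at h3
      have h4 : eLpNorm (fun y => b y - cm m) p (volume.restrict (Qn n)) ≤ ENNReal.ofReal Θ :=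
        le_trans (eLpNorm_mono_measure _ (Measure.restrict_mono (hQmono hnm) le_rfl)) (hsn m)
      have e2 : ∫⁻ y in Qn n, (‖b y - cm m‖₊ : ℝ≥0∞) ≤
          ENNReal.ofReal Θ * volume (Qn n) ^ (1 - 1/r) := by
        refine le_trans h3 ?_
        have : 1/(1:ℝ≥0∞).toReal - 1/p.toReal = 1 - 1/r := by
          rw [hp_toReal]; norm_num
        rw [this]
        exact mul_le_mul_left h4 _
      have hfin : ENNReal.ofReal Θ * volume (Qn n) ^ (1 - 1/r) ≠ ∞ :=
        ENNReal.mul_ne_top ENNReal.ofReal_ne_top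
          (ENNReal.rpow_ne_top_of_nonneg (by
            have : 1/r ≤ 1 := by
              rw [div_le_one hr0]; exact hr
            linarith) (hQfin n))
      rw [e1]
      calc (∫⁻ y in Qn n, (‖b y - cm m‖₊ : ℝ≥0∞)).toReal
          ≤ (ENNReal.ofReal Θ * volume (Qn n) ^ (1 - 1/r)).toReal :=
            ENNReal.toReal_mono hfin e2
        _ = Θ * ((2*((n:ℝ)+1))^d) ^ (1 - 1/r) := by
            rw [ENNReal.toReal_mul, ENNReal.toReal_ofReal hΘ, ← ENNReal.toReal_rpow,
              hQvol_toReal]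
    rw [dist_eq_norm, havg, norm_smul, norm_inv, Real.norm_eq_abs,
      abs_of_nonneg ENNReal.toReal_nonneg]
    calc (volume (Qn n)).toReal⁻¹ * ‖∫ y in Qn n, (b y - cm m)‖
        ≤ (volume (Qn n)).toReal⁻¹ * ∫ y in Qn n, ‖b y - cm m‖ := by
          apply mul_le_mul_of_nonneg_left (norm_integral_le_integral_norm _)
          positivity
      _ ≤ (volume (Qn n)).toReal⁻¹ * (Θ * ((2*((n:ℝ)+1))^d) ^ (1 - 1/r)) := by
          apply mul_le_mul_of_nonneg_left hnormint
          positivity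
      _ = Θ * ((2*((n:ℝ)+1))^d) ^ (-(1/r)) := by
          have hvp : (0:ℝ) < (2*((n:ℝ)+1))^d := hvpos n
          rw [hQvol_toReal]
          rw [← Real.rpow_neg_one ((2*((n:ℝ)+1))^d), mul_comm Θ, ← mul_assoc,
            ← Real.rpow_add hvp, show (-1:ℝ) + (1 - 1/r) = -(1/r) by ring]
          exact mul_comm _ _
  -- Cauchy sequence of averages
  have hu0 : Tendsto (fun N : ℕ => Θ * ((2*((N:ℝ)+1))^d) ^ (-(1/r))) atTop (𝓝 0) := by
    have h0 : (0:ℝ) = Θ * 0 := by ring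
    rw [h0]
    apply Tendsto.const_mul
    have h1 : Tendsto (fun N : ℕ => 2*((N:ℝ)+1)) atTop atTop := by
      apply tendsto_atTop_mono (fun N : ℕ => ?_) tendsto_natCast_atTop_atTop
      nlinarith [Nat.cast_nonneg (α := ℝ) N]
    have h2 : Tendsto (fun N : ℕ => (2*((N:ℝ)+1))^d) atTop atTop :=
      (tendsto_pow_atTop (Nat.one_le_iff_ne_zero.1 hd)).comp h1
    exact (tendsto_rpow_neg_atTop (by positivity : (0:ℝ) < 1/r)).comp h2
  have hcauchy : CauchySeq cm := by
    apply cauchySeq_of_le_tendsto_0 _ (fun n m N hn hm => ?_) hu0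
    have key : ∀ n m : ℕ, N ≤ n → n ≤ m →
        dist (cm n) (cm m) ≤ Θ * ((2*((N:ℝ)+1))^d) ^ (-(1/r)) := by
      intro n m hN hnm
      refine le_trans (hdist n m hnm) ?_
      apply mul_le_mul_of_nonneg_left ?_ hΘ
      apply Real.rpow_le_rpow_of_nonpos (hvpos N) ?_ (neg_nonpos.2 (by positivity))
      apply pow_le_pow_left₀ (hside N).le
      have : (N:ℝ) ≤ n := Nat.cast_le.2 hN
      linarith
    rcases le_total n m with h | h
    · exact key n m hn h
    · rw [dist_comm]; exact key m n hm h
  obtain ⟨c0, hc0⟩ := cauchySeq_tendsto_of_complete hcauchy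
  -- Fatou on each fixed cube
  have hmeas_m : ∀ z : ℂ, Measurable fun x => (‖b x - z‖₊ : ℝ≥0∞) ^ r := fun z =>
    ENNReal.continuous_rpow_const.measurable.comp (hbmeas.sub measurable_const).enorm
  have hQb : ∀ n, ∫⁻ x in Qn n, (‖b x - c0‖₊ : ℝ≥0∞) ^ r ≤ ENNReal.ofReal (Θ ^ r) := by
    intro n
    have hpt : ∀ x, Tendsto (fun m => (‖b x - cm m‖₊ : ℝ≥0∞) ^ r) atTop
        (𝓝 ((‖b x - c0‖₊ : ℝ≥0∞) ^ r)) := by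
      intro x
      have t1 : Tendsto (fun m => b x - cm m) atTop (𝓝 (b x - c0)) :=
        tendsto_const_nhds.sub hc0
      have t2 : Tendsto (fun m => (‖b x - cm m‖₊ : ℝ≥0∞)) atTop (𝓝 (‖b x - c0‖₊ : ℝ≥0∞)) :=
        ENNReal.tendsto_coe.2 t1.nnnorm
      exact (ENNReal.continuous_rpow_const.tendsto _).comp t2
    calc ∫⁻ x in Qn n, (‖b x - c0‖₊ : ℝ≥0∞) ^ r
        = ∫⁻ x in Qn n, liminf (fun m => (‖b x - cm m‖₊ : ℝ≥0∞) ^ r) atTop :=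
          lintegral_congr fun x => ((hpt x).liminf_eq).symm
      _ ≤ liminf (fun m => ∫⁻ x in Qn n, (‖b x - cm m‖₊ : ℝ≥0∞) ^ r) atTop :=
          lintegral_liminf_le fun m => hmeas_m (cm m)
      _ ≤ ENNReal.ofReal (Θ ^ r) := by
          apply liminf_le_of_frequently_le'
          apply Filter.Eventually.frequently
          filter_upwards [Filter.eventually_ge_atTop n] with m hm
          exact le_trans (lintegral_mono_set (hQmono hm)) (keyQn m)
  -- monotone convergence to the whole space
  have htot : ∫⁻ x, (‖b x - c0‖₊ : ℝ≥0∞) ^ r ≤ ENNReal.ofReal (Θ ^ r) := by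
    set ν := volume.withDensity (fun x => (‖b x - c0‖₊ : ℝ≥0∞) ^ r) with hν
    have hU : (⋃ n, Qn n) = Set.univ := Set.iUnion_eq_univ_iff.2 hQcover
    have h1 : ∫⁻ x, (‖b x - c0‖₊ : ℝ≥0∞) ^ r = ν Set.univ := by
      rw [hν, withDensity_apply _ MeasurableSet.univ, Measure.restrict_univ]
    rw [h1, ← hU, hQmono.measure_iUnion]
    apply iSup_le
    intro n
    rw [hν, withDensity_apply _ (measurableSet_cube _ _)]
    exact hQb n
  -- conclusion
  have hbound : eLpNorm (fun x => b x - c0) p volume ≤ ENNReal.ofReal Θ := by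
    rw [eLpNorm_eq_lintegral_rpow_enorm_toReal hp_ne_zero hp_ne_top, hp_toReal]
    calc (∫⁻ x, (‖b x - c0‖₊ : ℝ≥0∞) ^ r) ^ (1/r)
        ≤ (ENNReal.ofReal (Θ ^ r)) ^ (1/r) := ENNReal.rpow_le_rpow htot (by positivity)
      _ = ENNReal.ofReal Θ := hofr
  refine ⟨c0, fun x => b x - c0, ?_, hbound, ?_⟩
  · exact ⟨(hbmeas.sub measurable_const).aestronglyMeasurable,
      lt_of_le_of_lt hbound ENNReal.ofReal_lt_top⟩
  · refine Filter.Eventually.of_forall fun x => ?_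
    ring
end

section
/- Let X be a real Banach space and let V be a subset of the closed unit ball of X with V = −V. For a fixed α > 0, the following three conditions are equivalent: (1) for every continuous linear functional λ ∈ X*, sup_{x ∈ V} |λ(x)| ≥ α·‖λ‖_{X*}; (2) the closed convex hull of V contains the closed ball of radius α centred at 0; (3) the s-convex hull s(V) := { Σ_{j=1}^{∞} λ_j x_j : x_j ∈ V, λ_j ≥ 0, Σ_j λ_j = 1 } (the series converging in X) contains the open ball of radius α centred at 0. -/
set_option maxHeartbeats 1000000

open Metric Filter

lemma aux_repr {X : Type*} [NormedAddCommGroup X] [NormedSpace ℝ X] {V : Set X} {v0 : X}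
    (hv0 : v0 ∈ V) {c : X} (hc : c ∈ convexHull ℝ V) :
    ∃ (μ : ℕ → ℝ) (w : ℕ → X), (∀ i, 0 ≤ μ i) ∧ (∀ i, w i ∈ V) ∧ HasSum μ 1 ∧
      HasSum (fun i => μ i • w i) c := by
  rw [mem_convexHull_iff_exists_fintype] at hc
  obtain ⟨ι, hι, wι, z, hw0, hw1, hz, hx⟩ := hc
  classical
  set k := Fintype.card ι with hk
  let e : Fin k ≃ ι := (Fintype.equivFin ι).symm
  refine ⟨fun i => if h : i < k then wι (e ⟨i, h⟩) else 0,
    fun i => if h : i < k then z (e ⟨i, h⟩) else v0, ?_, ?_, ?_, ?_⟩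
  · intro i; dsimp only; split
    · exact hw0 _
    · exact le_refl 0
  · intro i; dsimp only; split
    · exact hz _
    · exact hv0
  · have h0 : ∀ i ∉ Finset.range k, (if h : i < k then wι (e ⟨i, h⟩) else 0) = 0 := by
      intro i hi
      rw [dif_neg (by simpa using hi)]
    have := hasSum_sum_of_ne_finset_zero (L := SummationFilter.unconditional ℕ) h0
    convert this using 1
    rw [← Fin.sum_univ_eq_sum_range (fun i => if h : i < k then wι (e ⟨i, h⟩) else 0) k]
    rw [← hw1, ← Equiv.sum_comp e wι]
    exact Finset.sum_congr rfl fun i _ => by rw [dif_pos i.isLt]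
  · have h0 : ∀ i ∉ Finset.range k,
        ((if h : i < k then wι (e ⟨i, h⟩) else 0) •
          (if h : i < k then z (e ⟨i, h⟩) else v0)) = 0 := by
      intro i hi
      rw [dif_neg (by simpa using hi), zero_smul]
    have := hasSum_sum_of_ne_finset_zero (L := SummationFilter.unconditional ℕ) h0
    convert this using 1
    rw [← Fin.sum_univ_eq_sum_range (fun i => (if h : i < k then wι (e ⟨i, h⟩) else 0) •
      (if h : i < k then z (e ⟨i, h⟩) else v0)) k]
    rw [← hx, ← Equiv.sum_comp e (fun j => wι j • z j)]
    exact Finset.sum_congr rfl fun i _ => by rw [dif_pos i.isLt, dif_pos i.isLt]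

/-- functional-analytic lemma of Coifman–Lions–Meyer–Semmes. For a
symmetric subset `V` of the closed unit ball of a real Banach space `X` and `α > 0`, the
following are equivalent: (1) `sup_{x ∈ V} |λ(x)| ≥ α‖λ‖` for every `λ ∈ X*` (phrased via
upper bounds); (2) the closed convex hull of `V` contains `closedBall 0 α`; (3) the
`s`-convex hull of `V` contains `ball 0 α`. -/
theorem statement14 (X : Type*) [NormedAddCommGroup X] [NormedSpace ℝ X] [CompleteSpace X]
    (V : Set X) (hV1 : V ⊆ closedBall (0 : X) 1) (hVsymm : ∀ x ∈ V, -x ∈ V)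
    (α : ℝ) (hα : 0 < α) :
    ((∀ lam : X →L[ℝ] ℝ, ∀ cb : ℝ, (∀ x ∈ V, |lam x| ≤ cb) → α * ‖lam‖ ≤ cb) ↔
      closedBall (0 : X) α ⊆ closure (convexHull ℝ V)) ∧
    (closedBall (0 : X) α ⊆ closure (convexHull ℝ V) ↔
      ball (0 : X) α ⊆
        {x : X | ∃ (v : ℕ → X) (lam : ℕ → ℝ),
          (∀ j, v j ∈ V) ∧ (∀ j, 0 ≤ lam j) ∧ HasSum lam 1 ∧
          HasSum (fun j => lam j • v j) x}) := by
  constructor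
  · -- (1) ↔ (2)
    have hCconv : Convex ℝ (closure (convexHull ℝ V)) := (convex_convexHull ℝ V).closure
    constructor
    · intro h1 y hy
      by_contra hyC
      obtain ⟨f, u, hfu, huf⟩ :=
        geometric_hahn_banach_closed_point hCconv isClosed_closure hyC
      have hsub : V ⊆ closure (convexHull ℝ V) :=
        (subset_convexHull ℝ V).trans subset_closure
      have hcb : ∀ x ∈ V, |f x| ≤ u := by
        intro x hx
        have h1' := hfu x (hsub hx)
        have h2' := hfu (-x) (hsub (hVsymm x hx))
        rw [map_neg] at h2'
        rw [abs_le]; constructor <;> linarith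
      have hle := h1 f u hcb
      have hfy : f y ≤ ‖f‖ * ‖y‖ := (le_abs_self _).trans (f.le_opNorm y)
      have hy' : ‖y‖ ≤ α := mem_closedBall_zero_iff.mp hy
      nlinarith [norm_nonneg f]
    · intro h2 lam cb hcb
      have hconvS : Convex ℝ {y : X | |lam y| ≤ cb} := by
        have : {y : X | |lam y| ≤ cb} = lam.toLinearMap ⁻¹' (Set.Icc (-cb) cb) := by
          ext y; simp [abs_le]
        rw [this]
        exact (convex_Icc (-cb) cb).linear_preimage lam.toLinearMap
      have hclosedS : IsClosed {y : X | |lam y| ≤ cb} := by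
        have : Continuous fun y : X => |lam y| := lam.continuous.abs
        exact isClosed_le this continuous_const
      have hC : closure (convexHull ℝ V) ⊆ {y : X | |lam y| ≤ cb} :=
        closure_minimal (convexHull_min hcb hconvS) hclosedS
      have hball : ∀ y : X, ‖y‖ ≤ α → |lam y| ≤ cb := fun y hy =>
        hC (h2 (mem_closedBall_zero_iff.mpr hy))
      have hcb0 : 0 ≤ cb := by simpa using hball 0 (by rw [norm_zero]; exact hα.le)
      have hnorm : ‖lam‖ ≤ cb / α := by
        refine lam.opNorm_le_bound (by positivity) fun x => ?_
        rcases eq_or_ne x 0 with rfl | hx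
        · simp
        · have hxn : (0:ℝ) < ‖x‖ := norm_pos_iff.mpr hx
          have := hball ((α / ‖x‖) • x) (by
            rw [norm_smul, Real.norm_eq_abs, abs_of_pos (by positivity)]
            rw [div_mul_cancel₀ _ hxn.ne'])
          rw [map_smul, smul_eq_mul, abs_mul, abs_of_pos (by positivity)] at this
          rw [Real.norm_eq_abs, div_mul_eq_mul_div, le_div_iff₀ hα]
          rw [div_mul_eq_mul_div, div_le_iff₀ hxn] at this
          nlinarith
      calc α * ‖lam‖ ≤ α * (cb / α) := by nlinarith
        _ = cb := by field_simp
  · constructor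
    · -- (2) → (3)
      intro h2 x hx
      have hxn : ‖x‖ < α := mem_ball_zero_iff.mp hx
      have hVne : V.Nonempty := by
        by_contra h
        rw [Set.not_nonempty_iff_eq_empty] at h
        have := h2 (mem_closedBall_self hα.le)
        simp [h] at this
      obtain ⟨v0, hv0⟩ := hVne
      set q : ℝ := (α - ‖x‖) / (2 * α) with hqdef
      have hq0 : 0 < q := div_pos (by linarith) (by linarith)
      have hq1 : q < 1 := by
        rw [hqdef, div_lt_one (by linarith)]
        nlinarith [norm_nonneg x]
      have hq1' : 0 < 1 - q := by linarith
      have hxq : ‖x‖ ≤ (1 - q) * α := by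
        have h : (1 - q) * α = (α + ‖x‖) / 2 := by
          rw [hqdef]; field_simp; ring
        rw [h]; linarith
      have hhull1 : convexHull ℝ V ⊆ closedBall (0 : X) 1 :=
        convexHull_min hV1 (convex_closedBall _ _)
      have step : ∀ y : X, ‖y‖ ≤ α → ∃ c, c ∈ convexHull ℝ V ∧ ‖y - c‖ ≤ q * α := by
        intro y hy
        have hycl : y ∈ closure (convexHull ℝ V) := h2 (mem_closedBall_zero_iff.mpr hy)
        rw [Metric.mem_closure_iff] at hycl
        obtain ⟨c, hc, hdc⟩ := hycl (q * α) (by positivity)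
        exact ⟨c, hc, by rw [← dist_eq_norm]; exact hdc.le⟩
      choose! cf hcf1 hcf2 using step
      let Y : ℕ → X := fun n => Nat.rec ((1 - q)⁻¹ • x) (fun _ y => q⁻¹ • (y - cf y)) n
      have hY0 : Y 0 = (1 - q)⁻¹ • x := rfl
      have hYsucc : ∀ n, Y (n + 1) = q⁻¹ • (Y n - cf (Y n)) := fun n => rfl
      have hYnorm : ∀ n, ‖Y n‖ ≤ α := by
        intro n
        induction n with
        | zero =>
          rw [hY0, norm_smul, Real.norm_eq_abs, abs_of_pos (inv_pos.mpr hq1'),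
            inv_mul_le_iff₀ hq1']
          exact hxq
        | succ n ih =>
          rw [hYsucc, norm_smul, Real.norm_eq_abs, abs_of_pos (inv_pos.mpr hq0),
            inv_mul_le_iff₀ hq0]
          exact hcf2 (Y n) ih
      set c : ℕ → X := fun n => cf (Y n) with hcdef
      have hcmem : ∀ n, c n ∈ convexHull ℝ V := fun n => hcf1 (Y n) (hYnorm n)
      have hcnorm : ∀ n, ‖c n‖ ≤ 1 := fun n => mem_closedBall_zero_iff.mp (hhull1 (hcmem n))
      have hrec : ∀ n, Y n = c n + q • Y (n + 1) := by
        intro n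
        rw [hYsucc n, smul_smul, mul_inv_cancel₀ hq0.ne', one_smul]
        abel
      have htel : ∀ N, Y 0 = (∑ n ∈ Finset.range N, q ^ n • c n) + q ^ N • Y N := by
        intro N
        induction N with
        | zero => simp
        | succ N ih =>
          calc Y 0 = (∑ n ∈ Finset.range N, q ^ n • c n) + q ^ N • Y N := ih
            _ = (∑ n ∈ Finset.range N, q ^ n • c n) + q ^ N • (c N + q • Y (N + 1)) := by
                rw [← hrec N]
            _ = (∑ n ∈ Finset.range (N + 1), q ^ n • c n) + q ^ (N + 1) • Y (N + 1) := by
                rw [Finset.sum_range_succ, smul_add, smul_smul, pow_succ]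
                abel
      have hsummable : Summable (fun n => ((1 - q) * q ^ n) • c n) := by
        apply Summable.of_norm
        apply Summable.of_nonneg_of_le (fun n => norm_nonneg _) (fun n => ?_)
          ((summable_geometric_of_lt_one hq0.le hq1).mul_left (1 - q))
        rw [norm_smul, Real.norm_eq_abs, abs_of_nonneg (by positivity)]
        calc (1 - q) * q ^ n * ‖c n‖ ≤ (1 - q) * q ^ n * 1 :=
              mul_le_mul_of_nonneg_left (hcnorm n) (by positivity)
          _ = (1 - q) * q ^ n := mul_one _
      obtain ⟨S, hShasSum⟩ := hsummable
      have hpartial : Tendsto (fun N => ∑ n ∈ Finset.range N, ((1 - q) * q ^ n) • c n)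
          atTop (nhds S) := hShasSum.tendsto_sum_nat
      have hY0x : (1 - q) • Y 0 = x := by
        rw [hY0, smul_smul, mul_inv_cancel₀ hq1'.ne', one_smul]
      have hpartial2 : Tendsto (fun N => ∑ n ∈ Finset.range N, ((1 - q) * q ^ n) • c n)
          atTop (nhds x) := by
        have heq : ∀ N, ∑ n ∈ Finset.range N, ((1 - q) * q ^ n) • c n
            = (1 - q) • (Y 0 - q ^ N • Y N) := by
          intro N
          have h : Y 0 - q ^ N • Y N = ∑ n ∈ Finset.range N, q ^ n • c n := by
            rw [htel N]; abel
          rw [h, Finset.smul_sum]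
          exact Finset.sum_congr rfl fun n _ => (smul_smul _ _ _).symm
        have hq2 : Tendsto (fun N => q ^ N • Y N) atTop (nhds 0) := by
          have htnd : Tendsto (fun N : ℕ => q ^ N * α) atTop (nhds 0) := by
            have h := (tendsto_pow_atTop_nhds_zero_of_lt_one hq0.le hq1).mul_const α
            simpa using h
          refine squeeze_zero_norm (fun N => ?_) htnd
          rw [norm_smul, Real.norm_eq_abs, abs_of_nonneg (by positivity)]
          exact mul_le_mul_of_nonneg_left (hYnorm N) (by positivity)
        have hlim : Tendsto (fun N => (1 - q) • (Y 0 - q ^ N • Y N)) atTop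
            (nhds ((1 - q) • (Y 0 - 0))) := ((tendsto_const_nhds.sub hq2).const_smul _)
        rw [sub_zero, hY0x] at hlim
        simpa [heq] using hlim
      have hgsum : HasSum (fun n => ((1 - q) * q ^ n) • c n) x := by
        rwa [tendsto_nhds_unique hpartial hpartial2] at hShasSum
      have hqsum : HasSum (fun n => (1 - q) * q ^ n) 1 := by
        have h := (hasSum_geometric_of_lt_one hq0.le hq1).mul_left (1 - q)
        rwa [mul_inv_cancel₀ hq1'.ne'] at h
      have hrepr : ∀ n, ∃ (μ : ℕ → ℝ) (w : ℕ → X), (∀ i, 0 ≤ μ i) ∧ (∀ i, w i ∈ V) ∧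
          HasSum μ 1 ∧ HasSum (fun i => μ i • w i) (c n) :=
        fun n => aux_repr hv0 (hcmem n)
      choose μ w hμ0 hwV hμs hcs using hrepr
      set ν : ℕ × ℕ → ℝ := fun p => (1 - q) * q ^ p.1 * μ p.1 p.2 with hνdef
      set W : ℕ × ℕ → X := fun p => w p.1 p.2 with hWdef
      have hν0 : ∀ p, 0 ≤ ν p := fun p => mul_nonneg (by positivity) (hμ0 _ _)
      have hfib1 : ∀ n, HasSum (fun i => ν (n, i)) ((1 - q) * q ^ n) := by
        intro n
        have h := (hμs n).mul_left ((1 - q) * q ^ n)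
        simpa using h
      have hfib2 : ∀ n, HasSum (fun i => ν (n, i) • W (n, i)) (((1 - q) * q ^ n) • c n) := by
        intro n
        have h := (hcs n).const_smul ((1 - q) * q ^ n)
        have heq : (fun i => ν (n, i) • W (n, i))
            = fun i => ((1 - q) * q ^ n) • (μ n i • w n i) := by
          funext i
          rw [hνdef, hWdef]
          rw [mul_smul]
        rw [heq]
        exact h
      have hνsummable : Summable ν := by
        rw [summable_prod_of_nonneg hν0]
        refine ⟨fun n => (hfib1 n).summable, ?_⟩
        have h : (fun n => ∑' i, ν (n, i)) = fun n => (1 - q) * q ^ n :=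
          funext fun n => (hfib1 n).tsum_eq
        rw [h]
        exact (summable_geometric_of_lt_one hq0.le hq1).mul_left (1 - q)
      have hν1 : HasSum ν 1 := by
        obtain ⟨T, hT⟩ := hνsummable
        have hT2 := hT.prod_fiberwise hfib1
        rwa [hT2.unique hqsum] at hT
      have hWsummable : Summable (fun p => ν p • W p) := by
        apply Summable.of_norm
        apply Summable.of_nonneg_of_le (fun p => norm_nonneg _) (fun p => ?_) hνsummable
        rw [norm_smul, Real.norm_eq_abs, abs_of_nonneg (hν0 p)]
        have hW1 : ‖W p‖ ≤ 1 := mem_closedBall_zero_iff.mp (hV1 (hwV p.1 p.2))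
        nlinarith [hν0 p, norm_nonneg (W p)]
      have hνW : HasSum (fun p => ν p • W p) x := by
        obtain ⟨T, hT⟩ := hWsummable
        have hT2 := hT.prod_fiberwise hfib2
        rwa [hT2.unique hgsum] at hT
      let E : ℕ × ℕ ≃ ℕ := Denumerable.eqv (ℕ × ℕ)
      exact ⟨fun j => W (E.symm j), fun j => ν (E.symm j), fun j => hwV _ _, fun j => hν0 _,
        (Equiv.hasSum_iff E.symm).mpr hν1, (Equiv.hasSum_iff E.symm).mpr hνW⟩
    · -- (3) → (2)
      intro h3
      -- first: the s-convex hull is inside the closure of the convex hull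
      have hS : {x : X | ∃ (v : ℕ → X) (lam : ℕ → ℝ),
          (∀ j, v j ∈ V) ∧ (∀ j, 0 ≤ lam j) ∧ HasSum lam 1 ∧
          HasSum (fun j => lam j • v j) x} ⊆ closure (convexHull ℝ V) := by
        rintro x ⟨v, lam, hv, hlam, hsum1, hsumx⟩
        have hps : Tendsto (fun N => ∑ j ∈ Finset.range N, lam j • v j) atTop (nhds x) :=
          hsumx.tendsto_sum_nat
        have hs1 : Tendsto (fun N => ∑ j ∈ Finset.range N, lam j) atTop (nhds 1) :=
          hsum1.tendsto_sum_nat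
        have htend : Tendsto
            (fun N => (∑ j ∈ Finset.range N, lam j • v j) +
              (1 - ∑ j ∈ Finset.range N, lam j) • v 0) atTop (nhds x) := by
          have : Tendsto (fun N => (1 - ∑ j ∈ Finset.range N, lam j) • v 0) atTop
              (nhds ((1 - 1 : ℝ) • v 0)) := ((tendsto_const_nhds.sub hs1).smul_const (v 0))
          simpa using hps.add this
        refine mem_closure_of_tendsto htend (Eventually.of_forall fun N => ?_)
        have hsle : ∑ j ∈ Finset.range N, lam j ≤ 1 :=
          sum_le_hasSum (Finset.range N) (fun j _ => hlam j) hsum1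
        have hmem : ∀ j, v j ∈ convexHull ℝ V := fun j => subset_convexHull ℝ V (hv j)
        classical
        set w : ℕ → ℝ := fun j => if j = N then 1 - ∑ i ∈ Finset.range N, lam i else lam j with hw
        set z : ℕ → X := fun j => if j = N then v 0 else v j with hz
        have hw0 : ∀ j ∈ Finset.range (N + 1), 0 ≤ w j := by
          intro j _
          by_cases h : j = N
          · simp only [hw, if_pos h]; linarith
          · simp only [hw, if_neg h]; exact hlam j
        have hw1 : ∑ j ∈ Finset.range (N + 1), w j = 1 := by
          rw [Finset.sum_range_succ]
          have h1 : ∀ j ∈ Finset.range N, w j = lam j := by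
            intro j hj
            simp only [hw, if_neg (Nat.ne_of_lt (Finset.mem_range.mp hj))]
          rw [Finset.sum_congr rfl h1]
          simp only [hw, if_pos rfl]
          ring
        have hzz : ∀ j ∈ Finset.range (N + 1), z j ∈ convexHull ℝ V := by
          intro j _
          by_cases h : j = N
          · simp only [hz, if_pos h]; exact hmem 0
          · simp only [hz, if_neg h]; exact hmem j
        have hmem2 := (convex_convexHull ℝ V).sum_mem hw0 hw1 hzz
        have hsum_eq : ∑ j ∈ Finset.range (N + 1), w j • z j
            = ∑ j ∈ Finset.range N, lam j • v j + (1 - ∑ j ∈ Finset.range N, lam j) • v 0 := by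
          rw [Finset.sum_range_succ]
          congr 1
          · refine Finset.sum_congr rfl fun j hj => ?_
            have hjN : j ≠ N := Nat.ne_of_lt (Finset.mem_range.mp hj)
            simp only [hw, hz, if_neg hjN]
          · simp only [hw, hz, if_pos rfl]
        exact hsum_eq ▸ hmem2
      -- now: closed ball inside closure via scaling
      intro y hy
      rw [← closure_closure (s := convexHull ℝ V)]
      rw [Metric.mem_closure_iff]
      intro ε hε
      set t : ℝ := 1 - min (1/2) (ε / (2 * α)) with ht
      have hmin0 : 0 < min (1/2) (ε / (2 * α)) := by positivity
      have hminle : min (1/2) (ε / (2 * α)) ≤ 1/2 := min_le_left _ _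
      have ht1 : t < 1 := by simp only [ht]; linarith
      have ht0 : 0 ≤ t := by simp only [ht]; linarith
      have hyn : ‖y‖ ≤ α := mem_closedBall_zero_iff.mp hy
      have hty : t • y ∈ ball (0 : X) α := by
        rw [mem_ball_zero_iff, norm_smul, Real.norm_eq_abs, abs_of_nonneg ht0]
        calc t * ‖y‖ ≤ t * α := by nlinarith
          _ < 1 * α := by nlinarith
          _ = α := one_mul α
      refine ⟨t • y, hS (h3 hty), ?_⟩
      have heq : y - t • y = (1 - t) • y := by module
      rw [dist_eq_norm, heq, norm_smul, Real.norm_eq_abs, abs_of_nonneg (by linarith)]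
      have h1t : 1 - t ≤ ε / (2 * α) := by
        simp only [ht, sub_sub_cancel]
        exact min_le_right _ _
      calc (1 - t) * ‖y‖ ≤ ε / (2 * α) * α := by
            apply mul_le_mul h1t hyn (norm_nonneg y) (by positivity)
        _ = ε / 2 := by field_simp
        _ < ε := by linarith
end

section
/- Let d ≥ 1, let k ≥ 1 be an integer, and let b ∈ L^k_loc(ℝ^d;ℝ). Let K : ℝ^d × ℝ^d → ℂ be measurable and let B, B̃ ⊂ ℝ^d be disjoint balls of equal radius such that (x,y) ↦ |b(x) − b(y)|^k·|K(x,y)| is integrable on B̃ × B and, for some complex number σ with |σ| = 1 and some c1 > 0, Re(σ·K(x,y)) ≥ c1/|B| for all x ∈ B̃ and y ∈ B. Then there exist measurable sets E_1, E_2 ⊆ B and Ẽ_1, Ẽ_2 ⊆ B̃ such that inf_{c ∈ ℝ} ∫_B |b(y) − c|^k dy ≤ (C_k/c1)·Σ_{i=1}^{2} |∬_{Ẽ_i × E_i} (b(x) − b(y))^k K(x,y) dy dx|, where C_k depends only on k. -/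
open MeasureTheory Metric Filter ENNReal Topology

lemma exists_median' {α : Type*} [MeasurableSpace α] (μ : Measure α) [IsFiniteMeasure μ]
    {b : α → ℝ} (hb : Measurable b) :
    ∃ m : ℝ, μ Set.univ / 2 ≤ μ {x | b x ≤ m} ∧ μ Set.univ / 2 ≤ μ {x | m ≤ b x} := by
  set V := μ Set.univ with hV
  rcases eq_or_ne V 0 with h0 | h0
  · exact ⟨0, by simp [h0], by simp [h0]⟩
  have hVtop : V ≠ ∞ := measure_ne_top μ _
  have hhalf : V / 2 < V := ENNReal.half_lt_self h0 hVtop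
  have hhalfpos : 0 < V / 2 := ENNReal.half_pos h0
  -- S nonempty
  have hU : (⋃ n : ℕ, {x | b x ≤ (n : ℝ)}) = Set.univ := by
    ext x
    simp only [Set.mem_iUnion, Set.mem_setOf_eq, Set.mem_univ, iff_true]
    exact exists_nat_ge (b x)
  have h1 : Tendsto (fun n : ℕ => μ {x | b x ≤ (n : ℝ)}) atTop (𝓝 V) := by
    have hmono : Monotone (fun n : ℕ => {x | b x ≤ (n : ℝ)}) := by
      intro n m hnm x hx
      simp only [Set.mem_setOf_eq] at hx ⊢
      have : (n:ℝ) ≤ (m:ℝ) := Nat.cast_le.2 hnm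
      linarith
    have := tendsto_measure_iUnion_atTop (μ := μ) hmono
    rwa [hU] at this
  obtain ⟨n₀, hn₀⟩ := (h1.eventually_const_le hhalf).exists
  have hSne : Set.Nonempty {t : ℝ | V / 2 ≤ μ {x | b x ≤ t}} := ⟨(n₀ : ℝ), hn₀⟩
  -- bddBelow
  have h2 : Tendsto (fun n : ℕ => μ {x | b x ≤ -(n : ℝ)}) atTop (𝓝 0) := by
    have hanti : Antitone (fun n : ℕ => {x | b x ≤ -(n : ℝ)}) := by
      intro n m hnm x hx
      simp only [Set.mem_setOf_eq] at hx ⊢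
      have : (n:ℝ) ≤ (m:ℝ) := Nat.cast_le.2 hnm
      linarith
    have hI : (⋂ n : ℕ, {x | b x ≤ -(n : ℝ)}) = ∅ := by
      ext x
      simp only [Set.mem_iInter, Set.mem_setOf_eq, Set.mem_empty_iff_false, iff_false, not_forall]
      obtain ⟨n, hn⟩ := exists_nat_gt (-(b x))
      exact ⟨n, by push_neg; linarith⟩
    have := tendsto_measure_iInter_atTop (μ := μ) (s := fun n : ℕ => {x | b x ≤ -(n : ℝ)})
      (fun n => (hb measurableSet_Iic).nullMeasurableSet) hanti ⟨0, measure_ne_top μ _⟩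
    rw [hI] at this
    simpa [Function.comp_def] using this
  obtain ⟨n₁, hn₁⟩ := (h2.eventually_lt_const hhalfpos).exists
  have hSbdd : BddBelow {t : ℝ | V / 2 ≤ μ {x | b x ≤ t}} := by
    refine ⟨-(n₁ : ℝ), fun t ht => ?_⟩
    by_contra h
    push_neg at h
    have : μ {x | b x ≤ t} ≤ μ {x | b x ≤ -(n₁ : ℝ)} :=
      measure_mono fun x hx => le_trans hx h.le
    exact absurd (le_trans ht this) (not_le.2 hn₁)
  set m := sInf {t : ℝ | V / 2 ≤ μ {x | b x ≤ t}} with hm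
  refine ⟨m, ?_, ?_⟩
  · -- V/2 ≤ μ {b ≤ m}
    have hIm : (⋂ n : ℕ, {x | b x ≤ m + 1 / ((n : ℝ) + 1)}) = {x | b x ≤ m} := by
      ext x
      simp only [Set.mem_iInter, Set.mem_setOf_eq]
      constructor
      · intro h
        by_contra hx
        push_neg at hx
        obtain ⟨n, hn⟩ := exists_nat_one_div_lt (sub_pos.2 hx)
        have := h n
        linarith
      · intro h n
        have : (0:ℝ) < 1 / ((n : ℝ) + 1) := by positivity
        linarith
    have hanti : Antitone (fun n : ℕ => {x | b x ≤ m + 1 / ((n : ℝ) + 1)}) := by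
      intro n n' hnn x hx
      simp only [Set.mem_setOf_eq] at hx ⊢
      have : 1 / ((n' : ℝ) + 1) ≤ 1 / ((n : ℝ) + 1) := by
        apply one_div_le_one_div_of_le (by positivity)
        have : (n:ℝ) ≤ (n':ℝ) := Nat.cast_le.2 hnn
        linarith
      linarith
    have htend := tendsto_measure_iInter_atTop (μ := μ)
      (s := fun n : ℕ => {x | b x ≤ m + 1 / ((n : ℝ) + 1)})
      (fun n => (hb measurableSet_Iic).nullMeasurableSet) hanti ⟨0, measure_ne_top μ _⟩
    rw [hIm] at htend
    refine ge_of_tendsto' htend fun n => ?_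
    show V / 2 ≤ μ {x | b x ≤ m + 1 / ((n : ℝ) + 1)}
    have hpos : (0:ℝ) < 1 / ((n : ℝ) + 1) := by positivity
    obtain ⟨t, ht, htlt⟩ := csInf_lt_iff hSbdd hSne |>.1 (by linarith : m < m + 1 / ((n : ℝ) + 1))
    exact le_trans ht (measure_mono fun x hx => le_trans hx htlt.le)
  · -- V/2 ≤ μ {m ≤ b}
    have hIm : (⋂ n : ℕ, {x | m - 1 / ((n : ℝ) + 1) < b x}) = {x | m ≤ b x} := by
      ext x
      simp only [Set.mem_iInter, Set.mem_setOf_eq]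
      constructor
      · intro h
        by_contra hx
        push_neg at hx
        obtain ⟨n, hn⟩ := exists_nat_one_div_lt (sub_pos.2 hx)
        have := h n
        linarith
      · intro h n
        have : (0:ℝ) < 1 / ((n : ℝ) + 1) := by positivity
        linarith
    have hanti : Antitone (fun n : ℕ => {x | m - 1 / ((n : ℝ) + 1) < b x}) := by
      intro n n' hnn x hx
      simp only [Set.mem_setOf_eq] at hx ⊢
      have : 1 / ((n' : ℝ) + 1) ≤ 1 / ((n : ℝ) + 1) := by
        apply one_div_le_one_div_of_le (by positivity)
        have : (n:ℝ) ≤ (n':ℝ) := Nat.cast_le.2 hnn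
        linarith
      linarith
    have htend := tendsto_measure_iInter_atTop (μ := μ)
      (s := fun n : ℕ => {x | m - 1 / ((n : ℝ) + 1) < b x})
      (fun n => (hb measurableSet_Ioi).nullMeasurableSet) hanti ⟨0, measure_ne_top μ _⟩
    rw [hIm] at htend
    refine ge_of_tendsto' htend fun n => ?_
    show V / 2 ≤ μ {x | m - 1 / ((n : ℝ) + 1) < b x}
    have hpos : (0:ℝ) < 1 / ((n : ℝ) + 1) := by positivity
    have hts : m - 1 / ((n : ℝ) + 1) ∉ {t : ℝ | V / 2 ≤ μ {x | b x ≤ t}} := by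
      intro hmem
      have := csInf_le hSbdd hmem
      rw [← hm] at this
      linarith
    have hle : μ {x | b x ≤ m - 1 / ((n : ℝ) + 1)} ≤ V / 2 := le_of_not_ge hts
    have hcompl : {x | m - 1 / ((n : ℝ) + 1) < b x} = {x | b x ≤ m - 1 / ((n : ℝ) + 1)}ᶜ := by
      ext x; simp [not_le]
    rw [hcompl, measure_compl (s := {x | b x ≤ m - 1 / ((n : ℝ) + 1)}) (hb measurableSet_Iic) (measure_ne_top μ _)]
    calc V / 2 = V - V / 2 := (ENNReal.sub_half hVtop).symm
    _ ≤ V - μ {x | b x ≤ m - 1 / ((n : ℝ) + 1)} := tsub_le_tsub_left hle V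

lemma two_pow_bound (a e : ℝ) (ha : 0 ≤ a) (he : 0 ≤ e) (k : ℕ) :
    (a + e) ^ k ≤ 2 ^ k * (a ^ k + e ^ k) := by
  have hmax : (max a e) ^ k ≤ a ^ k + e ^ k := by
    rcases le_total a e with h | h
    · rw [max_eq_right h]; exact le_add_of_nonneg_left (pow_nonneg ha k)
    · rw [max_eq_left h]; exact le_add_of_nonneg_right (pow_nonneg he k)
  calc (a + e) ^ k ≤ (2 * max a e) ^ k := by
        apply pow_le_pow_left₀ (by positivity)
        rcases le_total a e with h | h
        · rw [max_eq_right h]; linarith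
        · rw [max_eq_left h]; linarith
  _ = 2 ^ k * (max a e) ^ k := mul_pow _ _ _
  _ ≤ 2 ^ k * (a ^ k + e ^ k) := by
        exact mul_le_mul_of_nonneg_left hmax (by positivity)

lemma side_est {α : Type*} [MeasureSpace α] [SigmaFinite (volume : Measure α)]
    (k : ℕ) (K : α → α → ℂ) (b : α → ℝ)
    {Et E : Set α} (hEt : MeasurableSet Et) (hE : MeasurableSet E)
    (hEtfin : volume Et ≠ ⊤)
    (hf : IntegrableOn (fun z : α × α => (((b z.1 - b z.2) ^ k : ℝ) : ℂ) * K z.1 z.2)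
      (Et ×ˢ E) volume)
    {g : α → ℝ} (hg : IntegrableOn g E volume)
    (c : ℝ) (τ : ℂ) (hτ : ‖τ‖ = 1)
    (hpt : ∀ x ∈ Et, ∀ y ∈ E,
      c * g y ≤ (τ * ((((b x - b y) ^ k : ℝ) : ℂ) * K x y)).re) :
    c * ((volume Et).toReal * ∫ y in E, g y) ≤
      ‖∫ z in Et ×ˢ E, (((b z.1 - b z.2) ^ k : ℝ) : ℂ) * K z.1 z.2‖ := by
  set f : α × α → ℂ := fun z => (((b z.1 - b z.2) ^ k : ℝ) : ℂ) * K z.1 z.2 with hfdef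
  set I : ℂ := ∫ z in Et ×ˢ E, f z with hIdef
  haveI : IsFiniteMeasure (volume.restrict Et) :=
    ⟨by rw [Measure.restrict_apply_univ]; exact lt_top_iff_ne_top.2 hEtfin⟩
  have hrestrict : (volume : Measure (α × α)).restrict (Et ×ˢ E)
      = (volume.restrict Et).prod (volume.restrict E) := by
    rw [Measure.prod_restrict, ← Measure.volume_eq_prod]
  have hL : IntegrableOn (fun z : α × α => c * g z.2) (Et ×ˢ E) volume := by
    rw [IntegrableOn, hrestrict]
    exact (integrable_const c).mul_prod hg
  have hfτre : IntegrableOn (fun z : α × α => (τ * f z).re) (Et ×ˢ E) volume :=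
    (hf.const_mul τ).re
  have hmono : ∫ z in Et ×ˢ E, c * g z.2 ≤ ∫ z in Et ×ˢ E, (τ * f z).re :=
    setIntegral_mono_on hL hfτre (hEt.prod hE) (fun z hz => hpt z.1 hz.1 z.2 hz.2)
  have hLval : ∫ z in Et ×ˢ E, c * g z.2 = c * ((volume Et).toReal * ∫ y in E, g y) := by
    have h := setIntegral_prod_mul (μ := (volume : Measure α)) (ν := (volume : Measure α))
      (fun _ : α => c) g Et E
    rw [← Measure.volume_eq_prod] at h
    rw [h, setIntegral_const]
    simp only [smul_eq_mul, Measure.real]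
    ring
  have hRval : ∫ z in Et ×ˢ E, (τ * f z).re = (τ * I).re := by
    have h1 : ∫ z in Et ×ˢ E, τ * f z = τ * I := by
      rw [hIdef, ← integral_const_mul]
    rw [← h1]
    have := integral_re (μ := volume.restrict (Et ×ˢ E)) (hf.const_mul τ)
    simpa using this
  have habs : (τ * I).re ≤ ‖I‖ := by
    calc (τ * I).re ≤ ‖τ * I‖ := Complex.re_le_norm _
    _ = ‖I‖ := by rw [norm_mul, hτ, one_mul]
  calc c * ((volume Et).toReal * ∫ y in E, g y) = ∫ z in Et ×ˢ E, c * g z.2 := hLval.symm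
  _ ≤ ∫ z in Et ×ˢ E, (τ * f z).re := hmono
  _ = (τ * I).re := hRval
  _ ≤ ‖I‖ := habs




open MeasureTheory Metric Filter

/-- basic estimate of the median method. If `K` enjoys quantitative
positivity `Re(σK(x,y)) ≥ c₁/|B|` on `B̃ × B` for disjoint equal-radius balls `B`, `B̃`,
then `inf_c ∫_B |b − c|^k ≤ (C_k/c₁)·Σ_{i=1}^2 |⟨1_{Ẽᵢ}, T_b^k 1_{Eᵢ}⟩|` for suitable
measurable `Eᵢ ⊆ B`, `Ẽᵢ ⊆ B̃`, with `C_k` depending only on `k`. -/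
theorem statement15 (k : ℕ) (hk : 1 ≤ k) :
    ∃ C : ℝ, 0 < C ∧
      ∀ (d : ℕ), 1 ≤ d →
      ∀ (K : EuclideanSpace ℝ (Fin d) → EuclideanSpace ℝ (Fin d) → ℂ)
        (b : EuclideanSpace ℝ (Fin d) → ℝ),
        Measurable (fun z : EuclideanSpace ℝ (Fin d) × EuclideanSpace ℝ (Fin d) => K z.1 z.2) →
        Measurable b →
        LocallyIntegrable (fun x => |b x| ^ k) volume →
      ∀ (y0 x0 : EuclideanSpace ℝ (Fin d)) (r : ℝ), 0 < r →
        Disjoint (ball y0 r) (ball x0 r) →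
        -- absolute integrability of |b(x)−b(y)|^k·|K(x,y)| on B̃ × B
        IntegrableOn
          (fun z : EuclideanSpace ℝ (Fin d) × EuclideanSpace ℝ (Fin d) =>
            |b z.1 - b z.2| ^ k * ‖K z.1 z.2‖)
          ((ball x0 r) ×ˢ (ball y0 r)) volume →
      ∀ (σ : ℂ) (c1 : ℝ), ‖σ‖ = 1 → 0 < c1 →
        (∀ x ∈ ball x0 r, ∀ y ∈ ball y0 r,
          c1 / (volume (ball y0 r)).toReal ≤ (σ * K x y).re) →
      ∃ Es Ets : Fin 2 → Set (EuclideanSpace ℝ (Fin d)),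
        (∀ i, MeasurableSet (Es i)) ∧ (∀ i, MeasurableSet (Ets i)) ∧
        (∀ i, Es i ⊆ ball y0 r) ∧ (∀ i, Ets i ⊆ ball x0 r) ∧
        sInf {t : ℝ | ∃ c : ℝ, t = ∫ y in ball y0 r, |b y - c| ^ k}
          ≤ (C / c1) * ∑ i : Fin 2,
              ‖∫ z in (Ets i) ×ˢ (Es i),
                (((b z.1 - b z.2) ^ k : ℝ) : ℂ) * K z.1 z.2‖ := by
  refine ⟨2, by norm_num, ?_⟩
  intro d hd K b hK hb hbk y0 x0 r hr hdisj habs σ c1 hσ hc1 hpos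
  set B := ball y0 r with hBdef
  set Bt := ball x0 r with hBtdef
  have hBmeas : MeasurableSet B := measurableSet_ball
  have hBtmeas : MeasurableSet Bt := measurableSet_ball
  have hBfin : volume B ≠ ⊤ := measure_ball_lt_top.ne
  have hBtfin : volume Bt ≠ ⊤ := measure_ball_lt_top.ne
  set V : ℝ := (volume B).toReal with hVdef
  have hVpos : 0 < V := ENNReal.toReal_pos (measure_ball_pos volume y0 hr).ne' hBfin
  have hvol_eq : volume Bt = volume B := by
    rw [hBtdef, hBdef, Measure.addHaar_ball_center volume x0 r, Measure.addHaar_ball_center volume y0 r]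
  -- median of b on Bt
  haveI : IsFiniteMeasure (volume.restrict Bt) :=
    ⟨by rw [Measure.restrict_apply_univ]; exact lt_top_iff_ne_top.2 hBtfin⟩
  obtain ⟨m, hm1, hm2⟩ := exists_median' (volume.restrict Bt) hb
  rw [Measure.restrict_apply_univ, Measure.restrict_apply' hBtmeas] at hm1
  rw [Measure.restrict_apply_univ, Measure.restrict_apply' hBtmeas] at hm2
  -- the four sets
  set Et1 : Set (EuclideanSpace ℝ (Fin d)) := {x | m ≤ b x} ∩ Bt with hEt1def
  set Et2 : Set (EuclideanSpace ℝ (Fin d)) := {x | b x ≤ m} ∩ Bt with hEt2def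
  set E1 : Set (EuclideanSpace ℝ (Fin d)) := {y | b y ≤ m} ∩ B with hE1def
  set E2 : Set (EuclideanSpace ℝ (Fin d)) := {y | m < b y} ∩ B with hE2def
  have hEt1meas : MeasurableSet Et1 := (hb measurableSet_Ici).inter hBtmeas
  have hEt2meas : MeasurableSet Et2 := (hb measurableSet_Iic).inter hBtmeas
  have hE1meas : MeasurableSet E1 := (hb measurableSet_Iic).inter hBmeas
  have hE2meas : MeasurableSet E2 := (hb measurableSet_Ioi).inter hBmeas
  have hEt1fin : volume Et1 ≠ ⊤ :=
    ((measure_mono Set.inter_subset_right).trans_lt (lt_top_iff_ne_top.2 hBtfin)).ne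
  have hEt2fin : volume Et2 ≠ ⊤ :=
    ((measure_mono Set.inter_subset_right).trans_lt (lt_top_iff_ne_top.2 hBtfin)).ne
  -- volume lower bounds for Et1, Et2
  have ht1 : V / 2 ≤ (volume Et1).toReal := by
    have h : volume B / 2 ≤ volume Et1 := by rw [← hvol_eq]; exact hm2
    have := ENNReal.toReal_mono hEt1fin h
    rwa [ENNReal.toReal_div, ENNReal.toReal_ofNat] at this
  have ht2 : V / 2 ≤ (volume Et2).toReal := by
    have h : volume B / 2 ≤ volume Et2 := by rw [← hvol_eq]; exact hm1
    have := ENNReal.toReal_mono hEt2fin h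
    rwa [ENNReal.toReal_div, ENNReal.toReal_ofNat] at this
  -- integrability of the kernel pairing
  have hfmeas : Measurable (fun z : EuclideanSpace ℝ (Fin d) × EuclideanSpace ℝ (Fin d) =>
      (((b z.1 - b z.2) ^ k : ℝ) : ℂ) * K z.1 z.2) :=
    (Complex.measurable_ofReal.comp
      (((hb.comp measurable_fst).sub (hb.comp measurable_snd)).pow_const k)).mul hK
  have hfint : IntegrableOn (fun z : EuclideanSpace ℝ (Fin d) × EuclideanSpace ℝ (Fin d) =>
      (((b z.1 - b z.2) ^ k : ℝ) : ℂ) * K z.1 z.2) (Bt ×ˢ B) volume := by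
    rw [IntegrableOn, ← integrable_norm_iff (hfmeas.aestronglyMeasurable.restrict)]
    refine habs.congr (Filter.Eventually.of_forall fun z => ?_)
    simp only [norm_mul, Complex.norm_real, Real.norm_eq_abs, abs_pow]
  -- integrability of |b - m|^k on B
  have hbB : IntegrableOn (fun y => |b y| ^ k) B volume :=
    (hbk.integrableOn_isCompact (isCompact_closedBall y0 r)).mono_set ball_subset_closedBall
  have habsm : IntegrableOn (fun y => |b y - m| ^ k) B volume := by
    have hbound : IntegrableOn (fun y => (2:ℝ) ^ k * (|b y| ^ k + |m| ^ k)) B volume :=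
      (hbB.add (integrableOn_const measure_ball_lt_top.ne)).const_mul _
    refine Integrable.mono' hbound
      ((hb.sub_const m).abs.pow_const k).aestronglyMeasurable
      (Filter.Eventually.of_forall fun y => ?_)
    rw [Real.norm_eq_abs, abs_pow, abs_abs]
    calc |b y - m| ^ k ≤ (|b y| + |m|) ^ k := by
          apply pow_le_pow_left₀ (abs_nonneg _)
          rw [sub_eq_add_neg]
          exact (abs_add_le _ _).trans (by rw [abs_neg])
    _ ≤ 2 ^ k * (|b y| ^ k + |m| ^ k) := two_pow_bound _ _ (abs_nonneg _) (abs_nonneg _) k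
  have hg1 : IntegrableOn (fun y => (m - b y) ^ k) E1 volume := by
    refine Integrable.mono' (habsm.mono_set Set.inter_subset_right)
      ((measurable_const.sub hb).pow_const k).aestronglyMeasurable
      (Filter.Eventually.of_forall fun y => ?_)
    rw [Real.norm_eq_abs, abs_pow, abs_sub_comm]
  have hg2 : IntegrableOn (fun y => (b y - m) ^ k) E2 volume := by
    refine Integrable.mono' (habsm.mono_set Set.inter_subset_right)
      ((hb.sub_const m).pow_const k).aestronglyMeasurable
      (Filter.Eventually.of_forall fun y => ?_)
    rw [Real.norm_eq_abs, abs_pow]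
  -- side estimates
  have hpt1 : ∀ x ∈ Et1, ∀ y ∈ E1,
      c1 / V * (m - b y) ^ k ≤ (σ * ((((b x - b y) ^ k : ℝ) : ℂ) * K x y)).re := by
    intro x hx y hy
    have hre : (σ * ((((b x - b y) ^ k : ℝ) : ℂ) * K x y)).re
        = (b x - b y) ^ k * (σ * K x y).re := by
      have heq : σ * ((((b x - b y) ^ k : ℝ) : ℂ) * K x y)
          = (((b x - b y) ^ k : ℝ) : ℂ) * (σ * K x y) := by ring
      rw [heq]
      simp only [Complex.mul_re, Complex.ofReal_re, Complex.ofReal_im]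
      ring
    rw [hre]
    have h0 : (0:ℝ) ≤ m - b y := sub_nonneg.2 hy.1
    have h1 : m - b y ≤ b x - b y := by have := hx.1; simp only [Set.mem_setOf_eq] at this; linarith
    have hK' : c1 / V ≤ (σ * K x y).re := hpos x hx.2 y hy.2
    calc c1 / V * (m - b y) ^ k ≤ (σ * K x y).re * (b x - b y) ^ k :=
          mul_le_mul hK' (pow_le_pow_left₀ h0 h1 k) (pow_nonneg h0 k)
            (le_trans (by positivity) hK')
    _ = (b x - b y) ^ k * (σ * K x y).re := mul_comm _ _
  have hside1 := side_est k K b hEt1meas hE1meas hEt1fin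
    (hfint.mono_set (Set.prod_mono Set.inter_subset_right Set.inter_subset_right))
    hg1 (c1 / V) σ hσ hpt1
  have hτ2 : ‖(-1:ℂ) ^ k * σ‖ = 1 := by
    rw [norm_mul, norm_pow]
    simp [hσ]
  have hpt2 : ∀ x ∈ Et2, ∀ y ∈ E2,
      c1 / V * (b y - m) ^ k ≤ ((-1:ℂ) ^ k * σ * ((((b x - b y) ^ k : ℝ) : ℂ) * K x y)).re := by
    intro x hx y hy
    have hre : ((-1:ℂ) ^ k * σ * ((((b x - b y) ^ k : ℝ) : ℂ) * K x y)).re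
        = (b y - b x) ^ k * (σ * K x y).re := by
      have hr : ((b y - b x) : ℝ) ^ k = (-1:ℝ) ^ k * (b x - b y) ^ k := by
        rw [← neg_sub, neg_pow]
      have heq : (-1:ℂ) ^ k * σ * ((((b x - b y) ^ k : ℝ) : ℂ) * K x y)
          = ((((b y - b x) ^ k : ℝ)) : ℂ) * (σ * K x y) := by
        rw [hr]; push_cast; ring
      rw [heq]
      simp only [Complex.mul_re, Complex.ofReal_re, Complex.ofReal_im]
      ring
    rw [hre]
    have hx1 : b x ≤ m := hx.1
    have hy1 : m < b y := hy.1
    have h0 : (0:ℝ) ≤ b y - m := by linarith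
    have h1 : b y - m ≤ b y - b x := by linarith
    have hK' : c1 / V ≤ (σ * K x y).re := hpos x hx.2 y hy.2
    calc c1 / V * (b y - m) ^ k ≤ (σ * K x y).re * (b y - b x) ^ k :=
          mul_le_mul hK' (pow_le_pow_left₀ h0 h1 k) (pow_nonneg h0 k)
            (le_trans (by positivity) hK')
    _ = (b y - b x) ^ k * (σ * K x y).re := mul_comm _ _
  have hside2 := side_est k K b hEt2meas hE2meas hEt2fin
    (hfint.mono_set (Set.prod_mono Set.inter_subset_right Set.inter_subset_right))
    hg2 (c1 / V) ((-1:ℂ) ^ k * σ) hτ2 hpt2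
  -- nonnegativity of the two set integrals
  set J1 : ℝ := ∫ y in E1, (m - b y) ^ k with hJ1def
  set J2 : ℝ := ∫ y in E2, (b y - m) ^ k with hJ2def
  have hJ1nn : 0 ≤ J1 := setIntegral_nonneg hE1meas fun y hy =>
    pow_nonneg (sub_nonneg.2 hy.1) k
  have hJ2nn : 0 ≤ J2 := setIntegral_nonneg hE2meas fun y hy => by
    have : m < b y := hy.1
    exact pow_nonneg (by linarith) k
  set A1 : ℝ := ‖∫ z in Et1 ×ˢ E1,
    (((b z.1 - b z.2) ^ k : ℝ) : ℂ) * K z.1 z.2‖ with hA1def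
  set A2 : ℝ := ‖∫ z in Et2 ×ˢ E2,
    (((b z.1 - b z.2) ^ k : ℝ) : ℂ) * K z.1 z.2‖ with hA2def
  have hchain1 : c1 / 2 * J1 ≤ A1 := by
    refine le_trans ?_ hside1
    have h : c1 / 2 * J1 = c1 / V * (V / 2 * J1) := by field_simp
    rw [h]
    have := mul_le_mul_of_nonneg_right ht1 hJ1nn
    have h2 : c1 / V * (V / 2 * J1) ≤ c1 / V * ((volume Et1).toReal * J1) :=
      mul_le_mul_of_nonneg_left this (by positivity)
    exact h2
  have hchain2 : c1 / 2 * J2 ≤ A2 := by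
    refine le_trans ?_ hside2
    have h : c1 / 2 * J2 = c1 / V * (V / 2 * J2) := by field_simp
    rw [h]
    have := mul_le_mul_of_nonneg_right ht2 hJ2nn
    exact mul_le_mul_of_nonneg_left this (by positivity)
  -- split the full integral
  have hsplit : ∫ y in B, |b y - m| ^ k = J1 + J2 := by
    have hunion : E1 ∪ E2 = B := by
      ext y
      simp only [hE1def, hE2def, Set.mem_union, Set.mem_inter_iff, Set.mem_setOf_eq]
      constructor
      · rintro (⟨_, h⟩ | ⟨_, h⟩) <;> exact h
      · intro h
        rcases le_or_gt (b y) m with hbm | hbm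
        · exact Or.inl ⟨hbm, h⟩
        · exact Or.inr ⟨hbm, h⟩
    have hdisjE : Disjoint E1 E2 := by
      rw [Set.disjoint_left]
      intro y hy1 hy2
      simp only [hE1def, hE2def, Set.mem_inter_iff, Set.mem_setOf_eq] at hy1 hy2
      linarith [hy1.1, hy2.1]
    have h1 : ∫ y in E1, |b y - m| ^ k = J1 :=
      setIntegral_congr_fun hE1meas fun y hy => by
        have : b y ≤ m := hy.1
        rw [abs_of_nonpos (by linarith), neg_sub]
    have h2 : ∫ y in E2, |b y - m| ^ k = J2 :=
      setIntegral_congr_fun hE2meas fun y hy => by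
        have : m < b y := hy.1
        rw [abs_of_nonneg (by linarith)]
    rw [← hunion, setIntegral_union hdisjE hE2meas
      (habsm.mono_set Set.inter_subset_right) (habsm.mono_set Set.inter_subset_right),
      h1, h2]
  -- conclude
  have hsInf : sInf {t : ℝ | ∃ c : ℝ, t = ∫ y in B, |b y - c| ^ k}
      ≤ ∫ y in B, |b y - m| ^ k := by
    apply csInf_le
    · refine ⟨0, fun t ht => ?_⟩
      obtain ⟨c, rfl⟩ := ht
      exact integral_nonneg fun y => by positivity
    · exact ⟨m, rfl⟩
  refine ⟨![E1, E2], ![Et1, Et2], ?_, ?_, ?_, ?_, ?_⟩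
  · intro i
    fin_cases i <;> simp only [Matrix.cons_val_zero, Matrix.cons_val_one, Matrix.head_cons]
    exacts [hE1meas, hE2meas]
  · intro i
    fin_cases i <;> simp only [Matrix.cons_val_zero, Matrix.cons_val_one, Matrix.head_cons]
    exacts [hEt1meas, hEt2meas]
  · intro i
    fin_cases i <;> simp only [Matrix.cons_val_zero, Matrix.cons_val_one, Matrix.head_cons]
    exacts [Set.inter_subset_right, Set.inter_subset_right]
  · intro i
    fin_cases i <;> simp only [Matrix.cons_val_zero, Matrix.cons_val_one, Matrix.head_cons]
    exacts [Set.inter_subset_right, Set.inter_subset_right]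
  · rw [Fin.sum_univ_two]
    simp only [Matrix.cons_val_zero, Matrix.cons_val_one, Matrix.head_cons]
    have hJ1le : J1 ≤ 2 / c1 * A1 := by
      rw [div_mul_eq_mul_div, le_div_iff₀ hc1]
      nlinarith [hchain1]
    have hJ2le : J2 ≤ 2 / c1 * A2 := by
      rw [div_mul_eq_mul_div, le_div_iff₀ hc1]
      nlinarith [hchain2]
    calc sInf {t : ℝ | ∃ c : ℝ, t = ∫ y in B, |b y - c| ^ k}
        ≤ ∫ y in B, |b y - m| ^ k := hsInf
    _ = J1 + J2 := hsplit
    _ ≤ 2 / c1 * A1 + 2 / c1 * A2 := add_le_add hJ1le hJ2le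
    _ = 2 / c1 * (A1 + A2) := by ring
end
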